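/- Let ε ≥ 0 and let v be a value of the matrix game certified by optimal strategies. Suppose the action sequences i : ℕ → A and j : ℕ → B satisfy limsup_{t→∞} r₁(t) ≤ ε and limsup_{t→∞} r₂(t) ≤ ε. Then for every η > 0 there exists t₀ such that for all t ≥ t₀ the empirical frequency profile (σ̂₁(t), σ̂₂(t)) is a (4ε+η)-Nash equilibrium of the matrix game, i.e. u(br, σ̂₂(t)) − u(σ̂₁(t), σ̂₂(t)) ≤ 4ε + η and u(σ̂₁(t), σ̂₂(t)) − u(σ̂₁(t), br) ≤ 4ε + η. (This is the base case D = 1, i.e. the matrix-game case, of Theorem 3 on convergence of SM-MCTS-A with an ε-Hannan consistent selection function to a (2D(D+1)ε+η)-equilibrium, since 2·1·(1+1)ε = 4ε.) -/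

import Mathlib

open Finset Filter

private lemma fiber_sum' {α : Type*} [Fintype α] [DecidableEq α]
    (s : Finset ℕ) (f : ℕ → α) (c : α → ℝ) :
    ∑ x : α, ((s.filter fun n => f n = x).card : ℝ) * c x = ∑ n ∈ s, c (f n) := by
  rw [← Finset.sum_fiberwise s f (fun n => c (f n))]
  refine Finset.sum_congr rfl fun x _ => ?_
  rw [Finset.sum_congr rfl (fun n hn => by rw [(Finset.mem_filter.1 hn).2]),
    Finset.sum_const, nsmul_eq_mul]

/-- **Theorem 3, base case D = 1 (matrix games).**  If both players' average regrets have
`limsup ≤ ε` in a matrix game with value `v`, then for every `η > 0` there is `t₀` such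
that for all `t ≥ t₀` the empirical frequency profile `(σ̂₁(t), σ̂₂(t))` is a
`(4ε + η)`-Nash equilibrium of the matrix game. -/
theorem stmt_2 {A B : Type*} [Fintype A] [Fintype B] [Nonempty A] [Nonempty B]
    [DecidableEq A] [DecidableEq B]
    (a : A → B → ℝ) (ha : ∀ i j, a i j ∈ Set.Icc (0 : ℝ) 1)
    (ε : ℝ) (hε : 0 ≤ ε) (v : ℝ)
    (pstar : A → ℝ) (hp0 : ∀ i, 0 ≤ pstar i) (hp1 : ∑ i, pstar i = 1)
    (qstar : B → ℝ) (hq0 : ∀ j, 0 ≤ qstar j) (hq1 : ∑ j, qstar j = 1)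
    (hpv : ∀ j, v ≤ ∑ i, pstar i * a i j)
    (hqv : ∀ i, ∑ j, qstar j * a i j ≤ v)
    (i : ℕ → A) (j : ℕ → B)
    (r₁ r₂ : ℕ → ℝ)
    (hr₁ : ∀ t, r₁ t =
      ((univ.sup' univ_nonempty fun i₀ => ∑ s ∈ Finset.Icc 1 t, a i₀ (j s))
        - ∑ s ∈ Finset.Icc 1 t, a (i s) (j s)) / t)
    (hr₂ : ∀ t, r₂ t =
      ((∑ s ∈ Finset.Icc 1 t, a (i s) (j s))
        - univ.inf' univ_nonempty fun j₀ => ∑ s ∈ Finset.Icc 1 t, a (i s) j₀) / t)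
    (h1 : limsup r₁ atTop ≤ ε)
    (h2 : limsup r₂ atTop ≤ ε)
    (σ₁ : ℕ → A → ℝ) (σ₂ : ℕ → B → ℝ)
    (hσ₁ : ∀ t i₀, σ₁ t i₀ = (((Finset.Icc 1 t).filter (fun s => i s = i₀)).card : ℝ) / t)
    (hσ₂ : ∀ t j₀, σ₂ t j₀ = (((Finset.Icc 1 t).filter (fun s => j s = j₀)).card : ℝ) / t) :
    ∀ η > (0 : ℝ), ∃ t₀ : ℕ, ∀ t ≥ t₀,
      (univ.sup' univ_nonempty fun i₀ => ∑ j₀, σ₂ t j₀ * a i₀ j₀)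
          - (∑ i₀, ∑ j₀, σ₁ t i₀ * σ₂ t j₀ * a i₀ j₀) ≤ 4 * ε + η ∧
      (∑ i₀, ∑ j₀, σ₁ t i₀ * σ₂ t j₀ * a i₀ j₀)
          - (univ.inf' univ_nonempty fun j₀ => ∑ i₀, σ₁ t i₀ * a i₀ j₀) ≤ 4 * ε + η := by
  intro η hη
  have ha0 : ∀ i j, 0 ≤ a i j := fun i j => (ha i j).1
  have ha1 : ∀ i j, a i j ≤ 1 := fun i j => (ha i j).2
  -- payoff sums are between 0 and t
  have hcard : ∀ t : ℕ, ((Finset.Icc 1 t).card : ℝ) = t := by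
    intro t; rw [Nat.card_Icc]; simp
  have hsum0 : ∀ (t : ℕ) (f : ℕ → ℝ), (∀ s, 0 ≤ f s) → 0 ≤ ∑ s ∈ Finset.Icc 1 t, f s :=
    fun t f hf => Finset.sum_nonneg fun s _ => hf s
  have hsum1 : ∀ (t : ℕ) (f : ℕ → ℝ), (∀ s, f s ≤ 1) →
      ∑ s ∈ Finset.Icc 1 t, f s ≤ t := by
    intro t f hf
    calc ∑ s ∈ Finset.Icc 1 t, f s ≤ ∑ s ∈ Finset.Icc 1 t, (1 : ℝ) :=
          Finset.sum_le_sum fun s _ => hf s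
      _ = t := by rw [Finset.sum_const, nsmul_eq_mul, mul_one, hcard]
  -- upper bounds on regrets (needed for boundedness hypothesis)
  have hb1 : ∀ t, r₁ t ≤ 1 := by
    intro t
    rw [hr₁]
    rcases Nat.eq_zero_or_pos t with h | h
    · subst h
      rw [Finset.Icc_eq_empty (by omega)]
      simp
    · have ht : (0 : ℝ) < t := by exact_mod_cast h
      rw [div_le_iff₀ ht]
      have h3 : (univ.sup' univ_nonempty fun i₀ => ∑ s ∈ Finset.Icc 1 t, a i₀ (j s)) ≤ t :=
        Finset.sup'_le _ _ fun i₀ _ => hsum1 t _ fun s => ha1 i₀ (j s)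
      have h4 := hsum0 t (fun s => a (i s) (j s)) fun s => ha0 _ _
      linarith
  have hb2 : ∀ t, r₂ t ≤ 1 := by
    intro t
    rw [hr₂]
    rcases Nat.eq_zero_or_pos t with h | h
    · subst h
      rw [Finset.Icc_eq_empty (by omega)]
      simp
    · have ht : (0 : ℝ) < t := by exact_mod_cast h
      rw [div_le_iff₀ ht]
      have h3 : (0 : ℝ) ≤ univ.inf' univ_nonempty fun j₀ => ∑ s ∈ Finset.Icc 1 t, a (i s) j₀ :=
        Finset.le_inf' _ _ fun j₀ _ => hsum0 t _ fun s => ha0 (i s) j₀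
      have h4 := hsum1 t (fun s => a (i s) (j s)) fun s => ha1 _ _
      linarith
  have hev1 : ∀ᶠ t in atTop, r₁ t < ε + η / 2 :=
    eventually_lt_of_limsup_lt (lt_of_le_of_lt h1 (by linarith))
      (isBoundedUnder_of ⟨1, fun t => hb1 t⟩)
  have hev2 : ∀ᶠ t in atTop, r₂ t < ε + η / 2 :=
    eventually_lt_of_limsup_lt (lt_of_le_of_lt h2 (by linarith))
      (isBoundedUnder_of ⟨1, fun t => hb2 t⟩)
  obtain ⟨N₁, hN₁⟩ := eventually_atTop.1 hev1
  obtain ⟨N₂, hN₂⟩ := eventually_atTop.1 hev2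
  refine ⟨max (max N₁ N₂) 1, fun t ht' => ?_⟩
  have ht1 : 1 ≤ t := le_trans (le_max_right _ _) ht'
  have htN₁ : N₁ ≤ t := le_trans (le_trans (le_max_left _ _) (le_max_left _ _)) ht'
  have htN₂ : N₂ ≤ t := le_trans (le_trans (le_max_right _ _) (le_max_left _ _)) ht'
  have htR : (0 : ℝ) < t := by exact_mod_cast ht1
  -- abbreviations
  set N : A → ℝ := fun i₀ => ∑ s ∈ Finset.Icc 1 t, a i₀ (j s) with hNdef
  set T : B → ℝ := fun j₀ => ∑ s ∈ Finset.Icc 1 t, a (i s) j₀ with hTdef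
  -- key identities via fiber sums
  have hF : ∀ i₀, (∑ j₀, σ₂ t j₀ * a i₀ j₀) = N i₀ / t := by
    intro i₀
    simp only [hσ₂, div_mul_eq_mul_div, ← Finset.sum_div]
    rw [fiber_sum' (Finset.Icc 1 t) j (fun j₀ => a i₀ j₀)]
  have hG : ∀ j₀, (∑ i₀, σ₁ t i₀ * a i₀ j₀) = T j₀ / t := by
    intro j₀
    simp only [hσ₁, div_mul_eq_mul_div, ← Finset.sum_div]
    rw [fiber_sum' (Finset.Icc 1 t) i (fun i₀ => a i₀ j₀)]
  have hσ₁0 : ∀ i₀, 0 ≤ σ₁ t i₀ := by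
    intro i₀; rw [hσ₁]; positivity
  have hσ₂0 : ∀ j₀, 0 ≤ σ₂ t j₀ := by
    intro j₀; rw [hσ₂]; positivity
  have hs1 : ∑ i₀, σ₁ t i₀ = 1 := by
    simp only [hσ₁, ← Finset.sum_div]
    rw [div_eq_one_iff_eq (ne_of_gt htR)]
    have := fiber_sum' (Finset.Icc 1 t) i (fun _ => (1 : ℝ))
    simpa [hcard t] using this
  have hs2 : ∑ j₀, σ₂ t j₀ = 1 := by
    simp only [hσ₂, ← Finset.sum_div]
    rw [div_eq_one_iff_eq (ne_of_gt htR)]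
    have := fiber_sum' (Finset.Icc 1 t) j (fun _ => (1 : ℝ))
    simpa [hcard t] using this
  -- bounds on the exploitability terms
  have hsupF : (univ.sup' univ_nonempty fun i₀ => ∑ j₀, σ₂ t j₀ * a i₀ j₀)
      ≤ univ.sup' univ_nonempty N / t := by
    refine Finset.sup'_le _ _ fun i₀ _ => ?_
    rw [hF]
    exact (div_le_div_iff_of_pos_right htR).2 (Finset.le_sup' N (Finset.mem_univ i₀))
  have hinfG : univ.inf' univ_nonempty T / t
      ≤ univ.inf' univ_nonempty fun j₀ => ∑ i₀, σ₁ t i₀ * a i₀ j₀ := by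
    refine Finset.le_inf' _ _ fun j₀ _ => ?_
    rw [hG]
    exact (div_le_div_iff_of_pos_right htR).2 (Finset.inf'_le T (Finset.mem_univ j₀))
  -- bounds on the product utility U
  have hUle : (∑ i₀, ∑ j₀, σ₁ t i₀ * σ₂ t j₀ * a i₀ j₀) ≤ univ.sup' univ_nonempty N / t := by
    calc ∑ i₀, ∑ j₀, σ₁ t i₀ * σ₂ t j₀ * a i₀ j₀
        = ∑ i₀, σ₁ t i₀ * ∑ j₀, σ₂ t j₀ * a i₀ j₀ := by
          refine Finset.sum_congr rfl fun i₀ _ => ?_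
          rw [Finset.mul_sum]
          exact Finset.sum_congr rfl fun j₀ _ => by ring
      _ ≤ ∑ i₀, σ₁ t i₀ * (univ.sup' univ_nonempty N / t) := by
          refine Finset.sum_le_sum fun i₀ _ => ?_
          refine mul_le_mul_of_nonneg_left ?_ (hσ₁0 i₀)
          rw [hF]
          exact (div_le_div_iff_of_pos_right htR).2 (Finset.le_sup' N (Finset.mem_univ i₀))
      _ = univ.sup' univ_nonempty N / t := by rw [← Finset.sum_mul, hs1, one_mul]
  have hUge : univ.inf' univ_nonempty T / t ≤ ∑ i₀, ∑ j₀, σ₁ t i₀ * σ₂ t j₀ * a i₀ j₀ := by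
    calc univ.inf' univ_nonempty T / t
        = ∑ j₀, σ₂ t j₀ * (univ.inf' univ_nonempty T / t) := by
          rw [← Finset.sum_mul, hs2, one_mul]
      _ ≤ ∑ j₀, σ₂ t j₀ * ∑ i₀, σ₁ t i₀ * a i₀ j₀ := by
          refine Finset.sum_le_sum fun j₀ _ => ?_
          refine mul_le_mul_of_nonneg_left ?_ (hσ₂0 j₀)
          rw [hG]
          exact (div_le_div_iff_of_pos_right htR).2 (Finset.inf'_le T (Finset.mem_univ j₀))
      _ = ∑ i₀, ∑ j₀, σ₁ t i₀ * σ₂ t j₀ * a i₀ j₀ := by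
          simp only [Finset.mul_sum]
          rw [Finset.sum_comm]
          exact Finset.sum_congr rfl fun i₀ _ => Finset.sum_congr rfl fun j₀ _ => by ring
  -- the total gap is r₁ t + r₂ t ≤ 2ε + η ≤ 4ε + η
  have hgap : univ.sup' univ_nonempty N / t - univ.inf' univ_nonempty T / t ≤ 4 * ε + η := by
    have e1 := hr₁ t
    have e2 := hr₂ t
    have e3 : univ.sup' univ_nonempty N / t - univ.inf' univ_nonempty T / t
        = r₁ t + r₂ t := by
      rw [e1, e2, ← add_div, ← sub_div]
      ring_nf
      rw [hNdef, hTdef]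
      ring
    have b1 := le_of_lt (hN₁ t htN₁)
    have b2 := le_of_lt (hN₂ t htN₂)
    linarith
  constructor <;> linarith
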